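/- Let I ⊆ ℝ be a nontrivial interval (an order-connected set containing at least two points) and let σ be a nonempty countable set. Then the σ-fork F_σ, equipped with its Alexandroff topology, is an interior image of I: there exists a surjective continuous open map from the subspace I onto F_σ. -/

import Mathlib

open Set

/-- The Alexandroff topology of a relation `R`: opens are exactly the `R`-upsets. -/
def alexandroff {W : Type*} (R : W → W → Prop) : TopologicalSpace W where
  IsOpen U := ∀ x ∈ U, ∀ y, R x y → y ∈ U
  isOpen_univ := fun _ _ y _ => mem_univ y
  isOpen_inter := fun _ _ hU hV x hx y hxy => ⟨hU x hx.1 y hxy, hV x hx.2 y hxy⟩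
  isOpen_sUnion := fun S hS x hx y hxy => by
    obtain ⟨U, hU, hxU⟩ := hx
    exact ⟨U, hU, hS U hU x hxU y hxy⟩

/-- The underlying set `{r, m} ⊔ σ` of the `σ`-fork: `none` is the root `r`, `some none` is the
maximal point `m`, and `some (some s)` is the point `s` of the cluster `σ`. -/
def Fork (σ : Type*) : Type _ := Option (Option σ)

/-- The relation of the `σ`-fork: the root sees everything, `m` sees only itself, and the
points of the cluster `σ` see exactly one another. -/
def forkRel (σ : Type*) : Fork σ → Fork σ → Prop := fun p q =>
  match p, q with
  | none, _ => True
  | some none, some none => True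
  | some (some _), some (some _) => True
  | _, _ => False


lemma aux_unique (n n' : ℕ) (q q' : ℚ) (h : (q:ℝ) + n * Real.sqrt 2 = (q':ℝ) + n' * Real.sqrt 2) :
    n = n' := by
  by_contra hne
  have hnn : ((n:ℝ)) - (n':ℝ) ≠ 0 := by
    rw [sub_ne_zero]
    exact_mod_cast hne
  have h2 : Real.sqrt 2 = ((q' - q : ℚ) : ℝ) / ((n:ℝ) - (n':ℝ)) := by
    field_simp
    push_cast; linear_combination h
  have h3 : ((((q' - q) / ((n:ℚ) - (n':ℚ))) : ℚ) : ℝ) = Real.sqrt 2 := by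
    rw [h2]; push_cast; ring
  exact irrational_sqrt_two ⟨_, h3⟩

noncomputable def idx (x : ℝ) : ℕ :=
  letI := Classical.propDecidable (∃ n : ℕ, ∃ q : ℚ, x = (q:ℝ) + n * Real.sqrt 2)
  if h : ∃ n : ℕ, ∃ q : ℚ, x = (q:ℝ) + n * Real.sqrt 2 then h.choose else 0

lemma idx_spec (n : ℕ) (q : ℚ) : idx ((q:ℝ) + n * Real.sqrt 2) = n := by
  have hex : ∃ n' : ℕ, ∃ q' : ℚ, (q:ℝ) + n * Real.sqrt 2 = (q':ℝ) + n' * Real.sqrt 2 :=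
    ⟨n, q, rfl⟩
  rw [idx, dif_pos hex]
  obtain ⟨q', hq'⟩ := hex.choose_spec
  exact (aux_unique _ _ _ _ hq').symm

lemma idx_dense (n : ℕ) (lo hi : ℝ) (h : lo < hi) : ∃ x ∈ Ioo lo hi, idx x = n := by
  obtain ⟨q, hq1, hq2⟩ := exists_rat_btwn (sub_lt_sub_right h (n * Real.sqrt 2))
  exact ⟨(q:ℝ) + n * Real.sqrt 2, ⟨by linarith, by linarith⟩, idx_spec n q⟩

theorem statement15 (I : Set ℝ) (hI : I.OrdConnected)
    (h2 : ∃ x ∈ I, ∃ y ∈ I, x ≠ y)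
    (σ : Type*) [Countable σ] [Nonempty σ] :
    ∃ f : I → Fork σ, Function.Surjective f ∧
      @Continuous I (Fork σ) _ (alexandroff (forkRel σ)) f ∧
      @IsOpenMap I (Fork σ) _ (alexandroff (forkRel σ)) f := by
  classical
  obtain ⟨a0, ha0, b0, hb0, hab0⟩ := h2
  obtain ⟨a, ha, b, hb, hab⟩ : ∃ a ∈ I, ∃ b ∈ I, a < b := by
    rcases lt_or_gt_of_ne hab0 with h | h
    · exact ⟨a0, ha0, b0, hb0, h⟩
    · exact ⟨b0, hb0, a0, ha0, h⟩
  set c : ℝ := (a + b) / 2 with hcdef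
  have hac : a < c := by rw [hcdef]; linarith
  have hcb : c < b := by rw [hcdef]; linarith
  have hcI : c ∈ I := hI.out ha hb ⟨hac.le, hcb.le⟩
  obtain ⟨e, he⟩ := exists_surjective_nat σ
  set f : I → Fork σ := fun x =>
    if (x:ℝ) < c then some (some (e (idx (x:ℝ)))) else
    if (x:ℝ) = c then none else some none with hfdef
  have hflt : ∀ x : I, (x:ℝ) < c → f x = some (some (e (idx (x:ℝ)))) := by
    intro x hx; simp [hfdef, hx]; rfl
  have hfeq : ∀ x : I, (x:ℝ) = c → f x = none := by
    intro x hx; simp [hfdef, hx]; rfl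
  have hfgt : ∀ x : I, c < (x:ℝ) → f x = some none := by
    intro x hx; simp [hfdef, not_lt_of_gt hx, hx.ne']; rfl
  have hdense : ∀ (t : σ) (lo hi : ℝ), lo < hi → ∃ z ∈ Ioo lo hi, e (idx z) = t := by
    intro t lo hi h
    obtain ⟨n, rfl⟩ := he t
    obtain ⟨z, hz, hzi⟩ := idx_dense n lo hi h
    exact ⟨z, hz, by rw [hzi]⟩
  refine ⟨f, ?_, ?_, ?_⟩
  · -- surjective
    intro p
    cases p with
    | none => exact ⟨⟨c, hcI⟩, hfeq _ rfl⟩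
    | some p' =>
      cases p' with
      | none => exact ⟨⟨b, hb⟩, hfgt _ hcb⟩
      | some t =>
        obtain ⟨z, hz, hze⟩ := hdense t a c hac
        have hzI : z ∈ I := hI.out ha hcI ⟨hz.1.le, hz.2.le⟩
        exact ⟨⟨z, hzI⟩, by rw [hflt ⟨z, hzI⟩ hz.2, hze]⟩
  · -- continuous
    rw [continuous_def]
    intro U hU
    have hU' : ∀ x ∈ U, ∀ y, forkRel σ x y → y ∈ U := hU
    by_cases hr : (none : Fork σ) ∈ U
    · have : f ⁻¹' U = univ := eq_univ_of_forall fun x => hU' none hr (f x) trivial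
      rw [this]; exact isOpen_univ
    · have hAopen : IsOpen {x : I | c < (x:ℝ)} :=
        (isOpen_Ioi (a := c)).preimage continuous_subtype_val
      have hBopen : IsOpen {x : I | (x:ℝ) < c} :=
        (isOpen_Iio (a := c)).preimage continuous_subtype_val
      by_cases hs : ∃ s : σ, (some (some s) : Fork σ) ∈ U
      · have hs' : ∀ s : σ, (some (some s) : Fork σ) ∈ U :=
          fun s => hU' _ hs.choose_spec _ trivial
        by_cases hm : (some none : Fork σ) ∈ U
        · have : f ⁻¹' U = {x : I | (x:ℝ) ≠ c} := by
            ext x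
            rcases lt_trichotomy (x:ℝ) c with hx | hx | hx
            · simp [hflt x hx, hs' _, hx.ne]; exact hs' _
            · simp [hfeq x hx, hr, hx]; exact hr
            · simp [hfgt x hx, hm, hx.ne']; exact hm
          rw [this]
          exact (isOpen_compl_singleton (x := c)).preimage continuous_subtype_val
        · have : f ⁻¹' U = {x : I | (x:ℝ) < c} := by
            ext x
            rcases lt_trichotomy (x:ℝ) c with hx | hx | hx
            · simp [hflt x hx, hs' _, hx]; exact hs' _
            · simp [hfeq x hx, hr, hx]; exact hr
            · simp [hfgt x hx, hm, not_lt_of_gt hx]; exact hm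
          rw [this]; exact hBopen
      · push_neg at hs
        by_cases hm : (some none : Fork σ) ∈ U
        · have : f ⁻¹' U = {x : I | c < (x:ℝ)} := by
            ext x
            rcases lt_trichotomy (x:ℝ) c with hx | hx | hx
            · simp [hflt x hx, hs _, not_lt_of_gt hx]; exact hs _
            · simp [hfeq x hx, hr, hx]; exact hr
            · simp [hfgt x hx, hm, hx]; exact hm
          rw [this]; exact hAopen
        · have : f ⁻¹' U = (∅ : Set I) := by
            ext x
            rcases lt_trichotomy (x:ℝ) c with hx | hx | hx
            · simp [hflt x hx, hs _]; exact hs _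
            · simp [hfeq x hx, hr]; exact hr
            · simp [hfgt x hx, hm]; exact hm
          rw [this]; exact isOpen_empty
  · -- open map
    intro V hV
    rw [isOpen_induced_iff] at hV
    obtain ⟨W, hW, rfl⟩ := hV
    have key : ∀ (t : σ) (lo hi : ℝ), lo < hi → hi ≤ c → Ioo lo hi ⊆ I → Ioo lo hi ⊆ W →
        (some (some t) : Fork σ) ∈ f '' (Subtype.val ⁻¹' W) := by
      intro t lo hi h1 h2 hIsub hWsub
      obtain ⟨z, hz, hze⟩ := hdense t lo hi h1
      exact ⟨⟨z, hIsub hz⟩, hWsub hz, by rw [hflt _ (lt_of_lt_of_le hz.2 h2), hze]⟩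
    intro p hp q hq
    obtain ⟨x, hxV, rfl⟩ := hp
    obtain ⟨ε, hε, hball⟩ := Metric.isOpen_iff.mp hW (x:ℝ) hxV
    rw [Real.ball_eq_Ioo] at hball
    rcases lt_trichotomy (x:ℝ) c with hx | hx | hx
    · rw [hflt x hx] at hq
      cases q with
      | none => exact hq.elim
      | some q' =>
        cases q' with
        | none => exact hq.elim
        | some t =>
          refine key t (x:ℝ) (min c ((x:ℝ) + ε)) (lt_min hx (by linarith)) (min_le_left _ _)
            ?_ ?_
          · intro z hz
            exact hI.out x.2 hcI ⟨hz.1.le, (lt_of_lt_of_le hz.2 (min_le_left _ _)).le⟩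
          · intro z hz
            exact hball ⟨by linarith [hz.1], lt_of_lt_of_le hz.2 (min_le_right _ _)⟩
    · cases q with
      | none => exact ⟨x, hxV, hfeq x hx⟩
      | some q' =>
        cases q' with
        | none =>
          obtain ⟨y, hy1, hy2⟩ := exists_between (lt_min hcb (by linarith : c < c + ε))
          have hyI : y ∈ I := hI.out hcI hb ⟨hy1.le, (lt_of_lt_of_le hy2 (min_le_left _ _)).le⟩
          refine ⟨⟨y, hyI⟩, hball ⟨by rw [hx]; linarith, by rw [hx]; exact lt_of_lt_of_le hy2 (min_le_right _ _)⟩, hfgt _ hy1⟩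
        | some t =>
          refine key t (max a (c - ε)) c (max_lt hac (by linarith)) le_rfl ?_ ?_
          · intro z hz
            exact hI.out ha hcI ⟨(le_max_left _ _).trans hz.1.le, hz.2.le⟩
          · intro z hz
            refine hball ⟨by rw [hx]; exact lt_of_le_of_lt (le_max_right _ _) hz.1, by rw [hx]; linarith [hz.2]⟩
    · rw [hfgt x hx] at hq
      cases q with
      | none => exact hq.elim
      | some q' =>
        cases q' with
        | none => exact ⟨x, hxV, hfgt x hx⟩
        | some t => exact hq.elim
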